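/- For every prime p and positive integers n, m, B_{n+p^m} \equiv (B_{p^m} - 1) * B_n + B_{n+1} (mod p). -/

import Mathlib

open Finset

/-- Stirling numbers of the second kind. -/
def stirling : ℕ → ℕ → ℕ
  | 0, 0 => 1
  | 0, _ + 1 => 0
  | _ + 1, 0 => 0
  | n + 1, k + 1 => stirling n k + (k + 1) * stirling n (k + 1)

lemma stirling_zero_of_lt : ∀ n k, n < k → stirling n k = 0
  | 0, 0, h => by omega
  | 0, k + 1, _ => rfl
  | n + 1, 0, h => by omega
  | n + 1, k + 1, h => by
    rw [stirling, stirling_zero_of_lt n k (by omega), stirling_zero_of_lt n (k+1) (by omega)]; ring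

lemma stirling_self : ∀ n, stirling n n = 1
  | 0 => rfl
  | n + 1 => by
    rw [stirling, stirling_self n, stirling_zero_of_lt n (n+1) (by omega)]; ring

def T (n k : ℕ) : ℤ := ∑ j ∈ range (k+1), (-1)^j * (k.choose j) * (j:ℤ)^n

lemma T_zero (k : ℕ) : T 0 k = if k = 0 then 1 else 0 := by
  simp only [T, pow_zero, mul_one]
  exact_mod_cast Int.alternating_sum_range_choose


lemma T_rec (n k : ℕ) : T (n+1) (k+1) = (k+1) * (T n (k+1) - T n k) := by
  have hL : T (n+1) (k+1)
      = ∑ i ∈ range (k+1), (-((k:ℤ)+1)) * ((-1)^i * (k.choose i) * ((i:ℤ)+1)^n) := by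
    rw [T, Finset.sum_range_succ']
    simp only [Nat.cast_zero, zero_pow (Nat.succ_ne_zero n), mul_zero, add_zero]
    refine Finset.sum_congr rfl fun i _ => ?_
    have hcast : (((k+1).choose (i+1) : ℤ)) * ((i:ℤ)+1) = ((k:ℤ)+1) * (k.choose i) := by
      exact_mod_cast congrArg (Nat.cast : ℕ → ℤ) (Nat.add_one_mul_choose_eq k i).symm
    push_cast
    linear_combination (-(-1:ℤ)^i * ((i:ℤ)+1)^n) * hcast
  have hR : T n (k+1) - T n k
      = ∑ i ∈ range (k+1), (-1:ℤ) * ((-1)^i * (k.choose i) * ((i:ℤ)+1)^n) := by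
    have h1 : T n (k+1) = (∑ i ∈ range (k+1), (-1:ℤ)^(i+1) * ((k+1).choose (i+1)) * ((i:ℤ)+1)^n)
        + (0:ℤ)^n := by
      rw [T, Finset.sum_range_succ']
      push_cast
      simp
    have h2 : T n k = (∑ i ∈ range (k+1), (-1:ℤ)^(i+1) * (k.choose (i+1)) * ((i:ℤ)+1)^n)
        + (0:ℤ)^n := by
      rw [T, Finset.sum_range_succ']
      rw [Finset.sum_range_succ _ k, Nat.choose_succ_self]
      push_cast
      simp
    rw [h1, h2]
    rw [add_sub_add_right_eq_sub, ← Finset.sum_sub_distrib]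
    refine Finset.sum_congr rfl fun i _ => ?_
    have hp : ((k+1).choose (i+1) : ℤ) = k.choose i + k.choose (i+1) := by
      exact_mod_cast congrArg (Nat.cast : ℕ → ℤ) (Nat.choose_succ_succ k i)
    linear_combination ((-1:ℤ)^(i+1) * ((i:ℤ)+1)^n) * hp
  rw [hL, hR, Finset.mul_sum]
  refine Finset.sum_congr rfl fun i _ => ?_
  ring

lemma fact_stirling : ∀ n k, ((-1:ℤ)^k * (k.factorial)) * (stirling n k) = T n k := by
  intro n
  induction n with
  | zero =>
    intro k
    rw [T_zero]
    match k with
    | 0 => simp [stirling]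
    | k + 1 => simp [stirling]
  | succ n ih =>
    intro k
    match k with
    | 0 =>
      show ((-1:ℤ)^0 * 1) * (stirling (n+1) 0 : ℤ) = T (n+1) 0
      rw [show stirling (n+1) 0 = 0 from rfl, T]
      simp
    | k + 1 =>
      rw [T_rec, ← ih k, ← ih (k+1), show stirling (n+1) (k+1) = stirling n k + (k+1) * stirling n (k+1) from rfl]
      push_cast [Nat.factorial_succ]
      ring

lemma T_cast (p n k : ℕ) : ((T n k : ℤ) : ZMod p) = ∑ j ∈ range (k+1), (-1)^j * (k.choose j) * (j : ZMod p)^n := by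
  rw [T]; push_cast; rfl

lemma stirling_one_cast (R : Type*) [Semiring R] (k : ℕ) :
    (stirling 1 k : R) = if k = 1 then 1 else 0 := by
  match k with
  | 0 => simp [stirling]
  | 1 => simp [stirling_self]
  | k + 2 => rw [stirling_zero_of_lt 1 (k+2) (by omega)]; simp

lemma stirling_prime (p : ℕ) [hF : Fact p.Prime] (k : ℕ) :
    (stirling p k : ZMod p) = (if k = 1 then 1 else 0) + (if k = p then 1 else 0) := by
  have hp := hF.out
  rcases lt_trichotomy k p with hk | hk | hk
  · have h1 : ((T p k : ℤ) : ZMod p) = ((T 1 k : ℤ) : ZMod p) := by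
      rw [T_cast, T_cast]
      exact Finset.sum_congr rfl fun j _ => by rw [pow_one, ZMod.pow_card]
    have h2 := congrArg (Int.cast : ℤ → ZMod p) (fact_stirling p k)
    have h3 := congrArg (Int.cast : ℤ → ZMod p) (fact_stirling 1 k)
    push_cast at h2 h3
    rw [h1, ← h3] at h2
    have hu : ((-1:ZMod p)^k * (k.factorial : ZMod p)) ≠ 0 := by
      apply mul_ne_zero
      · exact pow_ne_zero _ (neg_ne_zero.mpr one_ne_zero)
      · rw [Ne, ZMod.natCast_eq_zero_iff, hp.dvd_factorial]
        omega
    have := mul_left_cancel₀ hu h2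
    rw [this, stirling_one_cast]
    simp [Nat.ne_of_lt hk, (by omega : k ≠ p)]
  · subst hk
    rw [stirling_self]
    simp [hp.ne_one, Nat.cast_one]
  · rw [stirling_zero_of_lt p k hk]
    have h2 := hp.two_le
    rw [if_neg (by omega : ¬ k = 1), if_neg (by omega : ¬ k = p)]
    simp

lemma stirling_succ_succ (n k : ℕ) :
    stirling (n+1) (k+1) = stirling n k + (k+1) * stirling n (k+1) := rfl

lemma stirling_add_prime (p : ℕ) [hF : Fact p.Prime] : ∀ n k,
    (stirling (n + p) k : ZMod p)
      = (stirling (n+1) k : ZMod p) + (if p ≤ k then (stirling n (k - p) : ZMod p) else 0) := by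
  have hp := hF.out
  intro n
  induction n with
  | zero =>
    intro k
    rw [zero_add, stirling_prime]
    congr 1
    · rw [stirling_one_cast]
    · rcases le_or_gt p k with h | h
      · rw [if_pos h]
        rcases eq_or_lt_of_le h with h2 | h2
        · rw [if_pos h2.symm, ← h2, Nat.sub_self]
          simp [stirling]
        · rw [if_neg (by omega : ¬ k = p)]
          have : stirling 0 (k - p) = 0 := by
            have : k - p ≠ 0 := by omega
            match h3 : k - p with
            | 0 => omega
            | j + 1 => rfl
          rw [this]; simp
      · rw [if_neg (by omega : ¬ k = p), if_neg (by omega : ¬ p ≤ k)]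
  | succ n ih =>
    intro k
    match k with
    | 0 =>
      rw [show n + 1 + p = (n + p) + 1 from by omega]
      rw [show stirling ((n+p)+1) 0 = 0 from rfl, show stirling (n+1+1) 0 = 0 from rfl,
        if_neg (by have := hp.pos; omega : ¬ p ≤ 0)]
      simp
    | k + 1 =>
      have hkey : (if p ≤ k then (stirling n (k - p) : ZMod p) else 0)
          + ((k:ZMod p)+1) * (if p ≤ k+1 then (stirling n (k+1 - p) : ZMod p) else 0)
          = (if p ≤ k+1 then (stirling (n+1) (k+1-p) : ZMod p) else 0) := by
        rcases le_or_gt p k with h | h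
        · rw [if_pos h, if_pos (by omega), if_pos (by omega),
            show k + 1 - p = (k - p) + 1 from by omega, stirling_succ_succ]
          have hc : (((k - p : ℕ) : ZMod p) + 1) = (k : ZMod p) + 1 := by
            rw [Nat.cast_sub h, ZMod.natCast_self]; ring
          push_cast
          rw [hc]
        · rcases eq_or_lt_of_le (by omega : k + 1 ≤ p) with h2 | h2
          · rw [if_neg (by omega), if_pos (by omega), if_pos (by omega),
              show k + 1 - p = 0 from by omega,
              show stirling (n+1) 0 = 0 from rfl]
            have : (k : ZMod p) + 1 = 0 := by
              rw [show ((k:ZMod p)+1) = ((k+1:ℕ):ZMod p) from by push_cast; ring, h2,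
                ZMod.natCast_self]
            rw [this]
            simp
          · rw [if_neg (by omega), if_neg (by omega), if_neg (by omega)]
            simp
      rw [show n + 1 + p = (n + p) + 1 from by omega, stirling_succ_succ (n+p) k,
        stirling_succ_succ (n+1) k]
      push_cast [ih k, ih (k+1)]
      linear_combination hkey

/-- The `n`-th Bell number. -/
def bell (n : ℕ) : ℕ := ∑ k ∈ Finset.range (n + 1), stirling n k

lemma bell_touchard (p : ℕ) [hF : Fact p.Prime] (n : ℕ) :
    (bell (n + p) : ZMod p) = (bell (n+1) : ZMod p) + bell n := by
  have hp := hF.out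
  rw [bell, Nat.cast_sum]
  rw [Finset.sum_congr rfl (fun k (_ : k ∈ range (n+p+1)) => stirling_add_prime p n k),
    Finset.sum_add_distrib]
  congr 1
  · rw [bell, Nat.cast_sum]
    refine (Finset.sum_subset (Finset.range_subset_range.mpr (by have := hp.pos; omega)) fun x _ hx => ?_).symm
    rw [Finset.mem_range, not_lt] at hx
    rw [stirling_zero_of_lt (n+1) x (by omega), Nat.cast_zero]
  · rw [show n+p+1 = p + (n+1) from by omega, Finset.sum_range_add]
    have h1 : ∑ i ∈ range p, (if p ≤ i then (stirling n (i - p) : ZMod p) else 0) = 0 :=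
      Finset.sum_eq_zero fun i hi => if_neg (by rw [Finset.mem_range] at hi; omega)
    have h2 : ∑ i ∈ range (n+1), (if p ≤ p + i then (stirling n (p + i - p) : ZMod p) else 0)
        = ∑ i ∈ range (n+1), (stirling n i : ZMod p) :=
      Finset.sum_congr rfl fun i _ => by rw [if_pos (by omega), Nat.add_sub_cancel_left]
    rw [h1, h2, zero_add, bell, Nat.cast_sum]

lemma choose_mul_sum {R : Type*} [CommRing R] (k : ℕ) (f : ℕ → R) :
    ∑ j ∈ range (k+2), ((k+1).choose j : R) * f j
      = (∑ j ∈ range (k+1), (k.choose j : R) * f (j+1))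
        + ∑ j ∈ range (k+1), (k.choose j : R) * f j := by
  have hB : ∑ j ∈ range (k+2), ((k).choose j : R) * f j
      = ∑ j ∈ range (k+1), ((k.choose (j+1) : R)) * f (j+1) + (k.choose 0 : R) * f 0 :=
    Finset.sum_range_succ' _ (k+1)
  have hC : ∑ j ∈ range (k+2), ((k).choose j : R) * f j
      = ∑ j ∈ range (k+1), ((k).choose j : R) * f j := by
    rw [Finset.sum_range_succ, Nat.choose_succ_self]; push_cast; ring
  rw [Finset.sum_range_succ' _ (k+1)]
  have h1 : ∀ j ∈ range (k+1), (((k+1).choose (j+1) : ℕ) : R) * f (j+1)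
      = (k.choose j : R) * f (j+1) + (k.choose (j+1) : R) * f (j+1) := fun j _ => by
    rw [Nat.choose_succ_succ]; push_cast; ring
  rw [Finset.sum_congr rfl h1, Finset.sum_add_distrib]
  have h2 : ∑ j ∈ range (k+1), (k.choose (j+1) : R) * f (j+1)
      = ∑ j ∈ range (k+1), ((k).choose j : R) * f j - (k.choose 0 : R) * f 0 := by
    rw [eq_sub_iff_add_eq, ← hB, hC]
  rw [h2]
  simp
  ring

lemma bell_touchard_iter (p : ℕ) [hF : Fact p.Prime] : ∀ (k n : ℕ),
    (bell (n + k * p) : ZMod p) = ∑ j ∈ range (k+1), ((k.choose j : ℕ) : ZMod p) * bell (n + j) := by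
  intro k
  induction k with
  | zero => intro n; simp
  | succ k ih =>
    intro n
    rw [show n + (k+1) * p = (n + k * p) + p from by ring, bell_touchard,
      show n + k * p + 1 = (n+1) + k * p from by ring, ih (n+1), ih n,
      show k + 1 + 1 = k + 2 from rfl, choose_mul_sum k (fun j => (bell (n + j) : ZMod p))]
    congr 1
    exact Finset.sum_congr rfl fun j _ => by rw [show n + 1 + j = n + (j + 1) from by ring]

lemma bell_pow_aux (p : ℕ) [hF : Fact p.Prime] : ∀ (m : ℕ), 0 < m → ∀ n,
    (bell (n + p^m) : ZMod p) = (bell (n+1) : ZMod p) + (m : ZMod p) * bell n := by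
  have hp := hF.out
  intro m
  induction m with
  | zero => omega
  | succ m ih =>
    intro _ n
    rcases Nat.eq_zero_or_pos m with hm | hm
    · subst hm
      rw [pow_one, bell_touchard]
      push_cast
      ring
    · rw [show n + p^(m+1) = n + p^m * p from by ring, bell_touchard_iter p (p^m) n]
      have hsub : ({0, p^m} : Finset ℕ) ⊆ range (p^m + 1) := by
        intro x hx
        simp only [Finset.mem_insert, Finset.mem_singleton] at hx
        rcases hx with h | h <;> simp [h]
      have hzero : ∀ x ∈ range (p^m + 1), x ∉ ({0, p^m} : Finset ℕ) →
          (((p^m).choose x : ℕ) : ZMod p) * bell (n + x) = 0 := by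
        intro x _ hx
        simp only [Finset.mem_insert, Finset.mem_singleton, not_or] at hx
        rw [ZMod.natCast_eq_zero_iff _ p |>.mpr (hp.dvd_choose_pow hx.1 hx.2), zero_mul]
      rw [← Finset.sum_subset hsub hzero,
        Finset.sum_pair (by have := hp.pos; positivity : p^m ≠ 0).symm,
        Nat.choose_zero_right, Nat.choose_self, add_zero, ih hm n]
      push_cast
      ring

theorem bell_add_prime_pow (p n m : ℕ) (hp : p.Prime) (hn : 0 < n) (hm : 0 < m) :
    (bell (n + p ^ m) : ℤ) ≡ ((bell (p ^ m) : ℤ) - 1) * bell n + bell (n + 1) [ZMOD p] := by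
  haveI := Fact.mk hp
  rw [← ZMod.intCast_eq_intCast_iff]
  push_cast
  have h0 : (bell (p^m) : ZMod p) = (bell 1 : ZMod p) + (m : ZMod p) * bell 0 := by
    have := bell_pow_aux p m hm 0
    rwa [zero_add, zero_add] at this
  rw [bell_pow_aux p m hm n, h0, show bell 1 = 1 from by decide, show bell 0 = 1 from by decide]
  push_cast
  ring
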